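/- Consider the VNLM. There exists a threshold X₀ > 0 such that for every initial value x₀ ≥ X₀, the solution of the VNLM with x(0) = x₀ blows up in finite time: there is no solution defined on all of [0, ∞), and the maximal solution exists only on an interval [0, T*) with T* < ∞ and limsup_{t → T*⁻} x(t) = +∞. -/

import Mathlib

open Set Filter MeasureTheory

/-- The variable carrying capacity `k(t) = (k_max − k_min)·(cos(dπt)+1)/2 + k_min`. -/
noncomputable def kcap (kmin kmax d t : ℝ) : ℝ :=
  (kmax - kmin) * ((Real.cos (d * Real.pi * t) + 1) / 2) + kmin

/-- The cumulative density `h(t) = a·∫₀ᵗ x(s) ds`. -/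
noncomputable def hcum (a : ℝ) (x : ℝ → ℝ) (t : ℝ) : ℝ :=
  a * ∫ s in (0:ℝ)..t, x s

/-- `x` is a (C¹) solution of the VNLM on the set `D`:
it is continuous on `D` and satisfies
`x′(t) = (r − h(t))·x(t)·(1 − x(t)/k(t))` for all `t ∈ D`. -/
def IsVNLMSolOn (a r d kmin kmax : ℝ) (x : ℝ → ℝ) (D : Set ℝ) : Prop :=
  ContinuousOn x D ∧
  ∀ t ∈ D, HasDerivWithinAt x
    ((r - hcum a x t) * x t * (1 - x t / kcap kmin kmax d t)) D t

/-- The solution of the VNLM starting from `x₀` blows up in finite time: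
there is no solution on all of `[0, ∞)`, and every maximal solution lives on
an interval `[0, T*)` with `T* < ∞` and `limsup_{t → T*⁻} x(t) = +∞`. -/
def VNLMBlowsUp (a r d kmin kmax x0 : ℝ) : Prop :=
  (¬ ∃ x : ℝ → ℝ, x 0 = x0 ∧ IsVNLMSolOn a r d kmin kmax x (Set.Ici 0)) ∧
  ∀ (Tstar : ℝ) (x : ℝ → ℝ), 0 < Tstar → x 0 = x0 →
    IsVNLMSolOn a r d kmin kmax x (Set.Ico 0 Tstar) →
    (¬ ∃ b : ℝ, Tstar < b ∧ ∃ y : ℝ → ℝ, y 0 = x0 ∧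
        IsVNLMSolOn a r d kmin kmax y (Set.Ico 0 b) ∧
        ∀ t ∈ Set.Ico (0:ℝ) Tstar, y t = x t) →
    Filter.limsup (fun t => (x t : EReal)) (nhdsWithin Tstar (Set.Iio Tstar)) = ⊤

lemma kcap_ge {kmin kmax d : ℝ} (hk : kmin ≤ kmax) (t : ℝ) :
    kmin ≤ kcap kmin kmax d t := by
  have h1 := Real.neg_one_le_cos (d * Real.pi * t)
  unfold kcap; nlinarith

lemma kcap_le {kmin kmax d : ℝ} (hk : kmin ≤ kmax) (t : ℝ) :
    kcap kmin kmax d t ≤ kmax := by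
  have h1 := Real.cos_le_one (d * Real.pi * t)
  unfold kcap; nlinarith

lemma kcap_pos {kmin kmax d : ℝ} (hkmin : 0 < kmin) (hk : kmin ≤ kmax) (t : ℝ) :
    0 < kcap kmin kmax d t := lt_of_lt_of_le hkmin (kcap_ge hk t)

lemma kcap_cont (kmin kmax d : ℝ) : Continuous (kcap kmin kmax d) := by
  unfold kcap; fun_prop

/-- Generic first-crossing barrier lemma. -/
lemma barrier_gen {x φ : ℝ → ℝ} {t0 tst : ℝ} (ht : t0 ≤ tst)
    (hxc : ContinuousOn x (Icc t0 tst)) (hφc : ContinuousOn φ (Icc t0 tst))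
    (h0 : φ t0 ≤ x t0)
    (key : ∀ u ∈ Ico t0 tst, x u = φ u → (∀ s ∈ Icc t0 u, φ s ≤ x s) →
      ∃ c cφ, HasDerivWithinAt x c (Icc t0 tst) u ∧ HasDerivWithinAt φ cφ (Icc t0 tst) u ∧
        cφ < c) :
    ∀ t ∈ Icc t0 tst, φ t ≤ x t := by
  intro t htmem
  by_contra hlt
  push_neg at hlt
  set B : Set ℝ := {s | s ∈ Icc t0 tst ∧ x s < φ s} with hB
  have hBne : B.Nonempty := ⟨t, htmem, hlt⟩
  have hBbdd : BddBelow B := ⟨t0, fun s hs => hs.1.1⟩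
  set u := sInf B with hu
  have hut0 : t0 ≤ u := le_csInf hBne fun s hs => hs.1.1
  have hutst : u ≤ tst := le_trans (csInf_le hBbdd ⟨htmem, hlt⟩) htmem.2
  have huIcc : u ∈ Icc t0 tst := ⟨hut0, hutst⟩
  have hle : ∀ s ∈ Icc t0 tst, s < u → φ s ≤ x s := by
    intro s hs hsu
    by_contra h
    exact absurd (csInf_le hBbdd ⟨hs, lt_of_not_ge h⟩) (not_le.2 hsu)
  have happrox : ∀ δ > (0:ℝ), ∃ s ∈ B, s < u + δ := by
    intro δ hδ
    by_contra h
    push_neg at h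
    have : u + δ ≤ u := le_csInf hBne fun s hs => h s hs
    linarith
  by_cases huB : u ∈ B
  · -- left-limit contradiction
    rcases eq_or_lt_of_le hut0 with heq | hlt0
    · exact absurd huB.2 (not_lt.2 (heq ▸ h0))
    · have hψ : ContinuousWithinAt (fun s => x s - φ s) (Icc t0 tst) u :=
        ((hxc u huIcc).sub (hφc u huIcc))
      have hneg : x u - φ u < 0 := sub_neg.2 huB.2
      have hev : ∀ᶠ s in nhdsWithin u (Icc t0 tst), x s - φ s < 0 :=
        hψ (Iio_mem_nhds hneg)
      obtain ⟨U, hUopen, hUu, hUsub⟩ := mem_nhdsWithin.1 hev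
      obtain ⟨δ, hδ, hball⟩ := Metric.isOpen_iff.1 hUopen u hUu
      set s := max t0 (u - δ/2) with hs
      have hsu : s < u := max_lt hlt0 (by linarith)
      have hsmem : s ∈ Icc t0 tst := ⟨le_max_left _ _, le_trans hsu.le hutst⟩
      have hsball : s ∈ Metric.ball u δ := by
        rw [Metric.mem_ball, Real.dist_eq, abs_lt]
        constructor
        · have : u - δ/2 ≤ s := le_max_right _ _
          linarith
        · linarith [hsu]
      have h1 : x s - φ s < 0 := hUsub ⟨hball hsball, hsmem⟩
      linarith [hle s hsmem hsu]
  · -- crossing point: x u = φ u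
    have hxu_ge : φ u ≤ x u := by
      by_contra h
      exact huB ⟨huIcc, lt_of_not_ge h⟩
    have hxu_le : x u ≤ φ u := by
      by_contra h
      push_neg at h
      have hpos : 0 < x u - φ u := sub_pos.2 h
      have hψ : ContinuousWithinAt (fun s => x s - φ s) (Icc t0 tst) u :=
        ((hxc u huIcc).sub (hφc u huIcc))
      have hev : ∀ᶠ s in nhdsWithin u (Icc t0 tst), 0 < x s - φ s :=
        hψ (Ioi_mem_nhds hpos)
      obtain ⟨U, hUopen, hUu, hUsub⟩ := mem_nhdsWithin.1 hev
      obtain ⟨δ, hδ, hball⟩ := Metric.isOpen_iff.1 hUopen u hUu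
      obtain ⟨s, hsB, hslt⟩ := happrox δ hδ
      have hsu : u ≤ s := csInf_le hBbdd hsB
      have hsball : s ∈ Metric.ball u δ := by
        rw [Metric.mem_ball, Real.dist_eq, abs_lt]; constructor <;> linarith
      have h1 : 0 < x s - φ s := hUsub ⟨hball hsball, hsB.1⟩
      linarith [hsB.2]
    have heq : x u = φ u := le_antisymm hxu_le hxu_ge
    -- u < tst
    have hulttst : u < tst := by
      obtain ⟨s, hsB, _⟩ := happrox 1 one_pos
      have hsu : u ≤ s := csInf_le hBbdd hsB
      rcases eq_or_lt_of_le hsu with h | h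
      · exact absurd (h ▸ hsB) huB
      · exact lt_of_lt_of_le h hsB.1.2
    have hforall : ∀ s ∈ Icc t0 u, φ s ≤ x s := by
      intro s hs
      rcases eq_or_lt_of_le hs.2 with h | h
      · rw [h, heq]
      · exact hle s ⟨hs.1, le_trans hs.2 hutst⟩ h
    obtain ⟨c, cφ, hc, hcφ, hlt'⟩ := key u ⟨hut0, hulttst⟩ heq hforall
    have hd : HasDerivWithinAt (fun s => x s - φ s) (c - cφ) (Icc u tst) u :=
      (hc.sub hcφ).mono (Icc_subset_Icc hut0 le_rfl)
    rw [hasDerivWithinAt_iff_tendsto_slope] at hd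
    rw [Icc_diff_left] at hd
    have hev : ∀ᶠ s in nhdsWithin u (Ioc u tst), 0 < slope (fun s => x s - φ s) u s :=
      hd (Ioi_mem_nhds (by linarith))
    obtain ⟨U, hUopen, hUu, hUsub⟩ := mem_nhdsWithin.1 hev
    obtain ⟨δ, hδ, hball⟩ := Metric.isOpen_iff.1 hUopen u hUu
    obtain ⟨s, hsB, hslt⟩ := happrox δ hδ
    have hsu : u ≤ s := csInf_le hBbdd hsB
    have hsu' : u < s := lt_of_le_of_ne hsu (fun h => huB (h ▸ hsB))
    have hsball : s ∈ Metric.ball u δ := by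
      rw [Metric.mem_ball, Real.dist_eq, abs_lt]; constructor <;> linarith
    have hmem : s ∈ Ioc u tst := ⟨hsu', hsB.1.2⟩
    have hpos : 0 < slope (fun s => x s - φ s) u s := hUsub ⟨hball hsball, hmem⟩
    rw [slope_def_field] at hpos
    have : x s - φ s < 0 := sub_neg.2 hsB.2
    have hden : 0 < s - u := by linarith
    rw [div_pos_iff] at hpos
    rcases hpos with ⟨h1, _⟩ | ⟨_, h2⟩
    · simp only [heq, sub_self] at h1; linarith
    · linarith

section Apriori

variable {a r d kmin kmax T x0 : ℝ} {x : ℝ → ℝ}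

/-- lower barrier `φ` stays above `2 k_max` on `[0, t₁]`. -/
lemma phi_ge (hr : 0 < r) (hkmin : 0 < kmin) (hk : kmin ≤ kmax) (hkmax : 0 < kmax)
    (hx04 : 4*kmax ≤ x0) {t : ℝ} (ht0 : 0 ≤ t) (ht1 : t ≤ kmin/(4*r*kmax)) :
    2*kmax ≤ (x0⁻¹ + (r/kmin)*t)⁻¹ := by
  have hx0pos : 0 < x0 := lt_of_lt_of_le (by positivity) hx04
  have h1 : x0⁻¹ ≤ (4*kmax)⁻¹ := by gcongr <;> positivity
  have h2 : (r/kmin)*t ≤ (4*kmax)⁻¹ := by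
    have he : (r/kmin)*(kmin/(4*r*kmax)) = (4*kmax)⁻¹ := by
      field_simp
    calc (r/kmin)*t ≤ (r/kmin)*(kmin/(4*r*kmax)) := by gcongr <;> positivity
    _ = (4*kmax)⁻¹ := he
  have h3 : x0⁻¹ + (r/kmin)*t ≤ (2*kmax)⁻¹ := by
    have he2 : (4*kmax)⁻¹ + (4*kmax)⁻¹ = (2*kmax)⁻¹ := by
      field_simp
      ring
    linarith
  have h4 : 0 < x0⁻¹ + (r/kmin)*t := by positivity
  calc 2*kmax = ((2*kmax)⁻¹)⁻¹ := by rw [inv_inv]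
  _ ≤ (x0⁻¹ + (r/kmin)*t)⁻¹ := by gcongr

lemma vnlm_lower (ha : 0 < a) (hr : 0 < r) (hkmin : 0 < kmin) (hk : kmin ≤ kmax)
    (hx0 : x 0 = x0) (hX0 : 4*kmax*Real.exp ((r+1)*r/(a*kmin)) ≤ x0)
    (sol : IsVNLMSolOn a r d kmin kmax x (Ico 0 T)) :
    ∀ t ∈ Ico 0 T, t ≤ kmin/(4*r*kmax) → (x0⁻¹ + (r/kmin)*t)⁻¹ ≤ x t := by
  have hkmax : 0 < kmax := lt_of_lt_of_le hkmin hk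
  have hexp : (1:ℝ) ≤ Real.exp ((r+1)*r/(a*kmin)) := by
    rw [Real.one_le_exp_iff]; positivity
  have hx04 : 4*kmax ≤ x0 := le_trans (by nlinarith) hX0
  have hx0pos : 0 < x0 := lt_of_lt_of_le (by positivity) hx04
  set φ : ℝ → ℝ := fun s => (x0⁻¹ + (r/kmin)*s)⁻¹ with hφ
  have hgpos : ∀ s : ℝ, 0 ≤ s → 0 < x0⁻¹ + (r/kmin)*s := fun s hs => by positivity
  intro t ht htle
  have hsub : Icc 0 t ⊆ Ico 0 T := fun s hs => ⟨hs.1, lt_of_le_of_lt hs.2 ht.2⟩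
  have hφc : ContinuousOn φ (Icc 0 t) := by
    apply ContinuousOn.inv₀
    · fun_prop
    · intro s hs; exact ne_of_gt (hgpos s hs.1)
  have h0 : φ 0 ≤ x 0 := by
    simp only [hφ, mul_zero, add_zero, inv_inv, hx0, le_refl]
  have key : ∀ u ∈ Ico 0 t, x u = φ u → (∀ s ∈ Icc 0 u, φ s ≤ x s) →
      ∃ c cφ, HasDerivWithinAt x c (Icc 0 t) u ∧ HasDerivWithinAt φ cφ (Icc 0 t) u ∧ cφ < c := by
    intro u hu hequ hall
    have huD : u ∈ Ico 0 T := ⟨hu.1, lt_trans hu.2 ht.2⟩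
    have hc : HasDerivWithinAt x
        ((r - hcum a x u) * x u * (1 - x u / kcap kmin kmax d u)) (Icc 0 t) u :=
      (sol.2 u huD).mono hsub
    have hgu : 0 < x0⁻¹ + (r/kmin)*u := hgpos u hu.1
    have hgd : HasDerivAt (fun s => x0⁻¹ + (r/kmin)*s) (r/kmin) u := by
      simpa using ((hasDerivAt_id u).const_mul (r/kmin)).const_add x0⁻¹
    have hφd : HasDerivAt φ (-(r/kmin) / (x0⁻¹ + (r/kmin)*u)^2) u := hgd.inv (ne_of_gt hgu)
    refine ⟨_, _, hc, hφd.hasDerivWithinAt, ?_⟩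
    -- notation
    set X := x u with hX
    set k := kcap kmin kmax d u with hkdef
    have hkpos : 0 < k := kcap_pos hkmin hk u
    have hkle : k ≤ kmax := kcap_le hk u
    have hkge : kmin ≤ k := kcap_ge hk u
    have hXge : 2*kmax ≤ X := by
      rw [hequ]; exact phi_ge hr hkmin hk hkmax hx04 hu.1 (le_trans hu.2.le htle)
    have hXpos : 0 < X := by linarith
    have hXinv : x0⁻¹ + (r/kmin)*u = X⁻¹ := by
      rw [hequ, hφ, inv_inv]
    have hcφval : -(r/kmin) / (x0⁻¹ + (r/kmin)*u)^2 = -(r/kmin)*X^2 := by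
      rw [hXinv]; field_simp
    rw [hcφval]
    -- h := hcum ≥ 0
    have hpos : ∀ s ∈ Icc 0 u, 0 ≤ x s := by
      intro s hs
      have h1 : 0 < φ s := inv_pos.2 (hgpos s hs.1)
      linarith [hall s hs]
    have hh : 0 ≤ hcum a x u := by
      have : 0 ≤ ∫ s in (0:ℝ)..u, x s := intervalIntegral.integral_nonneg hu.1 hpos
      simpa [hcum] using mul_nonneg ha.le this
    set h := hcum a x u with hhdef
    have hXk : X/kmax ≤ X/k := by gcongr
    have hXk2 : (2:ℝ) ≤ X/kmax := by rw [le_div_iff₀ hkmax]; linarith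
    rcases le_or_gt h r with hcase | hcase
    · have e1 : X/k ≤ X/kmin := by gcongr
      have e3 : 1 - X/k ≤ 0 := by
        have : (1:ℝ) ≤ X/k := by linarith
        linarith
      have e4 : X*(1-X/k) ≤ 0 := mul_nonpos_of_nonneg_of_nonpos hXpos.le e3
      have e5 : r*(X*(1-X/k)) ≤ (r-h)*(X*(1-X/k)) :=
        mul_le_mul_of_nonpos_right (by linarith) e4
      have e6 : X*(1-X/kmin) ≤ X*(1-X/k) :=
        mul_le_mul_of_nonneg_left (by linarith) hXpos.le
      have e7 : r*(X*(1-X/kmin)) ≤ r*(X*(1-X/k)) :=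
        mul_le_mul_of_nonneg_left e6 hr.le
      have e8 : r*(X*(1-X/kmin)) = r*X - (r/kmin)*X^2 := by
        field_simp
      have e9 : (r-h)*X*(1 - X/k) = (r-h)*(X*(1-X/k)) := by ring
      rw [e9]
      linarith [e5, e7, e8, mul_pos hr hXpos]
    · have e3 : 1 - X/k ≤ 0 := by
        have : (1:ℝ) ≤ X/k := by linarith
        linarith
      have e4 : X*(1-X/k) ≤ 0 := mul_nonpos_of_nonneg_of_nonpos hXpos.le e3
      have e5 : 0 ≤ (r-h)*(X*(1-X/k)) := by
        have := mul_nonneg (neg_nonneg.2 (by linarith : r - h ≤ 0)) (neg_nonneg.2 e4)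
        nlinarith [this]
      have e6 : -(r/kmin)*X^2 < 0 := by
        have h7 : 0 < (r/kmin)*X^2 := by positivity
        linarith
      have e9 : (r-h)*X*(1 - X/k) = (r-h)*(X*(1-X/k)) := by ring
      linarith [e9 ▸ e5]
  have := barrier_gen ht.1 (sol.1.mono hsub) hφc (hx0 ▸ h0) key t ⟨ht.1, le_rfl⟩
  simpa [hφ] using this

end Apriori

section Apriori2

variable {a r d kmin kmax T x0 : ℝ} {x : ℝ → ℝ}

lemma vnlm_hcum_t1 (ha : 0 < a) (hr : 0 < r) (hkmin : 0 < kmin) (hk : kmin ≤ kmax)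
    (hx0 : x 0 = x0) (hX0 : 4*kmax*Real.exp ((r+1)*r/(a*kmin)) ≤ x0)
    (sol : IsVNLMSolOn a r d kmin kmax x (Ico 0 T))
    (ht1T : kmin/(4*r*kmax) < T) :
    r + 1 ≤ hcum a x (kmin/(4*r*kmax)) := by
  have hkmax : 0 < kmax := lt_of_lt_of_le hkmin hk
  set E := (r+1)*r/(a*kmin) with hE
  have hexp : (1:ℝ) ≤ Real.exp E := by rw [Real.one_le_exp_iff]; positivity
  have hx04 : 4*kmax ≤ x0 := le_trans (by nlinarith) hX0
  have hx0pos : 0 < x0 := lt_of_lt_of_le (by positivity) hx04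
  set t1 := kmin/(4*r*kmax) with ht1
  have ht1pos : 0 < t1 := by positivity
  have hgpos : ∀ s : ℝ, 0 ≤ s → 0 < x0⁻¹ + (r/kmin)*s := fun s hs => by positivity
  set φ : ℝ → ℝ := fun s => (x0⁻¹ + (r/kmin)*s)⁻¹ with hφ
  have hsub : Icc 0 t1 ⊆ Ico 0 T := fun s hs => ⟨hs.1, lt_of_le_of_lt hs.2 ht1T⟩
  have huIcc : uIcc (0:ℝ) t1 = Icc 0 t1 := uIcc_of_le ht1pos.le
  have hφc : ContinuousOn φ (Icc 0 t1) := by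
    apply ContinuousOn.inv₀
    · fun_prop
    · intro s hs; exact ne_of_gt (hgpos s hs.1)
  have hφint : IntervalIntegrable φ volume 0 t1 := by
    apply ContinuousOn.intervalIntegrable; rwa [huIcc]
  have hxint : IntervalIntegrable x volume 0 t1 := by
    apply ContinuousOn.intervalIntegrable; rw [huIcc]; exact sol.1.mono hsub
  have hφle : ∀ s ∈ Icc 0 t1, φ s ≤ x s := by
    intro s hs
    exact vnlm_lower ha hr hkmin hk hx0 hX0 sol s (hsub hs) hs.2
  have hmono : ∫ s in (0:ℝ)..t1, φ s ≤ ∫ s in (0:ℝ)..t1, x s :=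
    intervalIntegral.integral_mono_on ht1pos.le hφint hxint hφle
  -- compute ∫ φ
  set F : ℝ → ℝ := fun s => (kmin/r) * Real.log (x0⁻¹ + (r/kmin)*s) with hF
  have hFd : ∀ s ∈ uIcc (0:ℝ) t1, HasDerivAt F (φ s) s := by
    intro s hs
    rw [huIcc] at hs
    have hgu : 0 < x0⁻¹ + (r/kmin)*s := hgpos s hs.1
    have hgd : HasDerivAt (fun u => x0⁻¹ + (r/kmin)*u) (r/kmin) s := by
      simpa using ((hasDerivAt_id s).const_mul (r/kmin)).const_add x0⁻¹
    have hld : HasDerivAt (fun u => Real.log (x0⁻¹ + (r/kmin)*u))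
        ((r/kmin) / (x0⁻¹ + (r/kmin)*s)) s := hgd.log (ne_of_gt hgu)
    have := hld.const_mul (kmin/r)
    refine HasDerivAt.congr_deriv this ?_
    rw [hφ]
    have hden : 0 < kmin + r * s * x0 := by
      have : 0 ≤ r * s * x0 := mul_nonneg (mul_nonneg hr.le hs.1) hx0pos.le
      linarith
    field_simp
  have hint_eq : ∫ s in (0:ℝ)..t1, φ s = F t1 - F 0 :=
    intervalIntegral.integral_eq_sub_of_hasDerivAt hFd hφint
  -- lower bound for F t1 - F 0
  have hg1pos : 0 < x0⁻¹ + (r/kmin)*t1 := hgpos t1 ht1pos.le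
  have hFval : F t1 - F 0 = (kmin/r) * Real.log ((x0⁻¹ + (r/kmin)*t1) * x0) := by
    rw [hF]
    simp only [mul_zero, add_zero]
    rw [Real.log_mul (ne_of_gt hg1pos) (ne_of_gt hx0pos), Real.log_inv]
    ring
  have harg : Real.exp E ≤ (x0⁻¹ + (r/kmin)*t1) * x0 := by
    have h4 : (r/kmin)*t1 = (4*kmax)⁻¹ := by rw [ht1]; field_simp
    have : (x0⁻¹ + (r/kmin)*t1) * x0 = 1 + x0/(4*kmax) := by
      rw [h4]; field_simp
    rw [this]
    have : Real.exp E ≤ x0/(4*kmax) := by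
      rw [le_div_iff₀ (by positivity)]
      linarith [hX0]
    linarith
  have hlog : E ≤ Real.log ((x0⁻¹ + (r/kmin)*t1) * x0) := by
    calc E = Real.log (Real.exp E) := (Real.log_exp E).symm
    _ ≤ _ := Real.log_le_log (Real.exp_pos E) harg
  have hfinal : r + 1 ≤ a * ((kmin/r) * Real.log ((x0⁻¹ + (r/kmin)*t1) * x0)) := by
    have he : a * ((kmin/r) * E) = r + 1 := by rw [hE]; field_simp
    calc r + 1 = a * ((kmin/r) * E) := he.symm
    _ ≤ _ := by gcongr
  show r + 1 ≤ a * ∫ s in (0:ℝ)..t1, x s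
  calc r + 1 ≤ a * ((kmin/r) * Real.log ((x0⁻¹ + (r/kmin)*t1) * x0)) := hfinal
  _ = a * (F t1 - F 0) := by rw [hFval]
  _ = a * ∫ s in (0:ℝ)..t1, φ s := by rw [hint_eq]
  _ ≤ a * ∫ s in (0:ℝ)..t1, x s := by gcongr

end Apriori2

section Apriori3

variable {a r d kmin kmax T x0 : ℝ} {x : ℝ → ℝ}

lemma vnlm_ge (ha : 0 < a) (hr : 0 < r) (hkmin : 0 < kmin) (hk : kmin ≤ kmax)
    (hx0 : x 0 = x0) (hX0 : 4*kmax*Real.exp ((r+1)*r/(a*kmin)) ≤ x0)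
    (sol : IsVNLMSolOn a r d kmin kmax x (Ico 0 T)) :
    ∀ t ∈ Ico 0 T, 2*kmax ≤ x t := by
  have hkmax : 0 < kmax := lt_of_lt_of_le hkmin hk
  have hexp : (1:ℝ) ≤ Real.exp ((r+1)*r/(a*kmin)) := by
    rw [Real.one_le_exp_iff]; positivity
  have hx04 : 4*kmax ≤ x0 := le_trans (by nlinarith) hX0
  have hx0pos : 0 < x0 := lt_of_lt_of_le (by positivity) hx04
  set t1 := kmin/(4*r*kmax) with ht1
  have ht1pos : 0 < t1 := by positivity
  intro t ht
  by_cases htle : t ≤ t1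
  · have := vnlm_lower ha hr hkmin hk hx0 hX0 sol t ht htle
    have h2 := phi_ge hr hkmin hk hkmax hx04 ht.1 htle
    linarith
  · push_neg at htle
    have ht1T : t1 < T := lt_trans htle ht.2
    have ht1D : t1 ∈ Ico 0 T := ⟨ht1pos.le, ht1T⟩
    have hsub : Icc t1 t ⊆ Ico 0 T := fun s hs =>
      ⟨le_trans ht1pos.le hs.1, lt_of_le_of_lt hs.2 ht.2⟩
    have hhq := vnlm_hcum_t1 ha hr hkmin hk hx0 hX0 sol ht1T
    have h0 : (fun _ : ℝ => 2*kmax) t1 ≤ x t1 := by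
      have := vnlm_lower ha hr hkmin hk hx0 hX0 sol t1 ht1D le_rfl
      have h2 := phi_ge hr hkmin hk hkmax hx04 ht1pos.le le_rfl
      simpa using le_trans h2 this
    have key : ∀ u ∈ Ico t1 t, x u = (fun _ : ℝ => 2*kmax) u →
        (∀ s ∈ Icc t1 u, (fun _ : ℝ => 2*kmax) s ≤ x s) →
        ∃ c cφ, HasDerivWithinAt x c (Icc t1 t) u ∧
          HasDerivWithinAt (fun _ : ℝ => 2*kmax) cφ (Icc t1 t) u ∧ cφ < c := by
      intro u hu hequ hall
      simp only at hequ
      have huD : u ∈ Ico 0 T := hsub ⟨hu.1, hu.2.le⟩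
      have hc : HasDerivWithinAt x
          ((r - hcum a x u) * x u * (1 - x u / kcap kmin kmax d u)) (Icc t1 t) u :=
        (sol.2 u huD).mono hsub
      refine ⟨_, 0, hc, hasDerivWithinAt_const u _ _, ?_⟩
      set k := kcap kmin kmax d u with hkdef
      have hkpos : 0 < k := kcap_pos hkmin hk u
      have hkle : k ≤ kmax := kcap_le hk u
      -- hcum at u is at least r + 1
      have hxik : IntervalIntegrable x volume 0 t1 := by
        apply ContinuousOn.intervalIntegrable
        rw [uIcc_of_le ht1pos.le]
        exact sol.1.mono (fun s hs => ⟨hs.1, lt_of_le_of_lt hs.2 ht1T⟩)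
      have hxik2 : IntervalIntegrable x volume t1 u := by
        apply ContinuousOn.intervalIntegrable
        rw [uIcc_of_le hu.1]
        exact sol.1.mono (fun s hs => hsub ⟨hs.1, le_trans hs.2 hu.2.le⟩)
      have hadd : ∫ s in (0:ℝ)..u, x s
          = (∫ s in (0:ℝ)..t1, x s) + ∫ s in t1..u, x s :=
        (intervalIntegral.integral_add_adjacent_intervals hxik hxik2).symm
      have hInonneg : 0 ≤ ∫ s in t1..u, x s := by
        apply intervalIntegral.integral_nonneg hu.1
        intro s hs
        have h5 := hall s hs
        simp only at h5
        linarith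
      have hhq' : r + 1 ≤ a * ∫ s in (0:ℝ)..t1, x s := hhq
      have hhu : r + 1 ≤ hcum a x u := by
        show r + 1 ≤ a * ∫ s in (0:ℝ)..u, x s
        rw [hadd, mul_add]
        have h2 : 0 ≤ a * ∫ s in t1..u, x s := mul_nonneg ha.le hInonneg
        linarith
      set h := hcum a x u with hh
      -- inequality : 0 < (r - h) * (2kmax) * (1 - 2kmax/k)
      have hq : (2:ℝ) ≤ (2*kmax)/k := by
        have h1 : (2*kmax)/kmax ≤ (2*kmax)/k := by gcongr <;> positivity
        have h2 : (2*kmax)/kmax = 2 := by field_simp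
        linarith
      have he : (r - h)*(x u)*(1 - x u/k) = (h - r)*((2*kmax)*((2*kmax)/k - 1)) := by
        rw [hequ]; ring
      rw [he]
      have : 0 < (h - r)*((2*kmax)*((2*kmax)/k - 1)) := by
        apply mul_pos (by linarith)
        apply mul_pos (by positivity)
        linarith
      linarith
    have := barrier_gen htle.le (sol.1.mono hsub) continuousOn_const h0 key t
      ⟨htle.le, le_rfl⟩
    simpa using this

lemma vnlm_hcum_ge (ha : 0 < a) (hr : 0 < r) (hkmin : 0 < kmin) (hk : kmin ≤ kmax)
    (hx0 : x 0 = x0) (hX0 : 4*kmax*Real.exp ((r+1)*r/(a*kmin)) ≤ x0)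
    (sol : IsVNLMSolOn a r d kmin kmax x (Ico 0 T)) :
    ∀ t ∈ Ico 0 T, kmin/(4*r*kmax) ≤ t → r + 1 ≤ hcum a x t := by
  have hkmax : 0 < kmax := lt_of_lt_of_le hkmin hk
  set t1 := kmin/(4*r*kmax) with ht1
  have ht1pos : 0 < t1 := by positivity
  intro t ht htge
  have ht1T : t1 < T := lt_of_le_of_lt htge ht.2
  have hhq := vnlm_hcum_t1 ha hr hkmin hk hx0 hX0 sol ht1T
  have hxik : IntervalIntegrable x volume 0 t1 := by
    apply ContinuousOn.intervalIntegrable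
    rw [uIcc_of_le ht1pos.le]
    exact sol.1.mono (fun s hs => ⟨hs.1, lt_of_le_of_lt hs.2 ht1T⟩)
  have hxik2 : IntervalIntegrable x volume t1 t := by
    apply ContinuousOn.intervalIntegrable
    rw [uIcc_of_le htge]
    exact sol.1.mono (fun s hs => ⟨le_trans ht1pos.le hs.1, lt_of_le_of_lt hs.2 ht.2⟩)
  have hadd : ∫ s in (0:ℝ)..t, x s
      = (∫ s in (0:ℝ)..t1, x s) + ∫ s in t1..t, x s :=
    (intervalIntegral.integral_add_adjacent_intervals hxik hxik2).symm
  have hInonneg : 0 ≤ ∫ s in t1..t, x s := by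
    apply intervalIntegral.integral_nonneg htge
    intro s hs
    have hsD : s ∈ Ico 0 T := ⟨le_trans ht1pos.le hs.1, lt_of_le_of_lt hs.2 ht.2⟩
    have := vnlm_ge ha hr hkmin hk hx0 hX0 sol s hsD
    linarith
  have hhq' : r + 1 ≤ a * ∫ s in (0:ℝ)..t1, x s := hhq
  show r + 1 ≤ a * ∫ s in (0:ℝ)..t, x s
  rw [hadd, mul_add]
  have h2 : 0 ≤ a * ∫ s in t1..t, x s := mul_nonneg ha.le hInonneg
  linarith

end Apriori3

section Apriori4

variable {a r d kmin kmax T x0 : ℝ} {x : ℝ → ℝ}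

/-- Any solution with large initial data lives at most until `t₁ + 1`. -/
lemma vnlm_lt (ha : 0 < a) (hr : 0 < r) (hkmin : 0 < kmin) (hk : kmin ≤ kmax)
    (hx0 : x 0 = x0) (hX0 : 4*kmax*Real.exp ((r+1)*r/(a*kmin)) ≤ x0)
    (sol : IsVNLMSolOn a r d kmin kmax x (Ico 0 T)) :
    ∀ t ∈ Ico 0 T, t < kmin/(4*r*kmax) + 1 := by
  have hkmax : 0 < kmax := lt_of_lt_of_le hkmin hk
  set t1 := kmin/(4*r*kmax) with ht1
  have ht1pos : 0 < t1 := by positivity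
  intro t ht
  by_contra hcon
  push_neg at hcon
  have ht1t : t1 + 1 ≤ t := hcon
  have ht1T : t1 < T := by
    have := ht.2; linarith
  have hgeq := vnlm_ge ha hr hkmin hk hx0 hX0 sol
  have hhge := vnlm_hcum_ge ha hr hkmin hk hx0 hX0 sol
  set ψ : ℝ → ℝ := fun s => (x s)⁻¹ + (2*kmax)⁻¹ * (s - t1) with hψ
  have hsubD : Icc t1 t ⊆ Ico 0 T := fun s hs =>
    ⟨le_trans ht1pos.le hs.1, lt_of_le_of_lt hs.2 ht.2⟩
  have hxne : ∀ s ∈ Icc t1 t, x s ≠ 0 := fun s hs =>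
    ne_of_gt (lt_of_lt_of_le (by positivity) (hgeq s (hsubD hs)))
  have hψc : ContinuousOn ψ (Icc t1 t) := by
    apply ContinuousOn.add
    · exact ((sol.1.mono hsubD).inv₀ hxne)
    · fun_prop
  have hderiv : ∀ s ∈ Ioo t1 t, HasDerivAt ψ
      (-((r - hcum a x s) * x s * (1 - x s / kcap kmin kmax d s)) / (x s)^2
        + (2*kmax)⁻¹) s := by
    intro s hs
    have hsD : s ∈ Ico 0 T := hsubD ⟨hs.1.le, hs.2.le⟩
    have hnbhd : Ico 0 T ∈ nhds s := by
      rw [mem_nhds_iff]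
      exact ⟨Ioo 0 T, Ioo_subset_Ico_self, isOpen_Ioo, ⟨lt_trans ht1pos hs.1, hsD.2⟩⟩
    have hx' : HasDerivAt x
        ((r - hcum a x s) * x s * (1 - x s / kcap kmin kmax d s)) s :=
      (sol.2 s hsD).hasDerivAt hnbhd
    have h1 : HasDerivAt (fun u => (x u)⁻¹)
        (-((r - hcum a x s) * x s * (1 - x s / kcap kmin kmax d s)) / (x s)^2) s :=
      hx'.inv (hxne s ⟨hs.1.le, hs.2.le⟩)
    have h2 : HasDerivAt (fun u => (2*kmax)⁻¹ * (u - t1)) ((2*kmax)⁻¹) s := by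
      simpa using ((hasDerivAt_id s).sub_const t1).const_mul (2*kmax)⁻¹
    exact h1.add h2
  have hanti : AntitoneOn ψ (Icc t1 t) := by
    apply antitoneOn_of_deriv_nonpos (convex_Icc t1 t) hψc
    · intro s hs
      rw [interior_Icc] at hs
      exact ((hderiv s hs).differentiableAt).differentiableWithinAt
    · intro s hs
      rw [interior_Icc] at hs
      rw [(hderiv s hs).deriv]
      -- show the derivative is nonpositive
      have hsD : s ∈ Ico 0 T := hsubD ⟨hs.1.le, hs.2.le⟩
      set X := x s with hX
      set k := kcap kmin kmax d s with hkdef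
      set h := hcum a x s with hh
      have hkpos : 0 < k := kcap_pos hkmin hk s
      have hkle : k ≤ kmax := kcap_le hk s
      have hXge : 2*kmax ≤ X := hgeq s hsD
      have hXpos : 0 < X := lt_of_lt_of_le (by positivity) hXge
      have hhge' : r + 1 ≤ h := hhge s hsD hs.1.le
      have hq1 : X/kmax ≤ X/k := by gcongr
      have hq2 : X/(2*kmax) + 1 ≤ X/kmax := by
        have : X/kmax = X/(2*kmax) + X/(2*kmax) := by field_simp; ring
        have h3 : (1:ℝ) ≤ X/(2*kmax) := by
          rw [le_div_iff₀ (by positivity)]; linarith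
        linarith
      -- G ≥ X^2/(2 kmax)
      have hG : X^2*(2*kmax)⁻¹ ≤ (r - h) * X * (1 - X/k) := by
        have e1 : (r - h)*X*(1 - X/k) = (h - r)*(X*(X/k - 1)) := by ring
        rw [e1]
        have e2 : X*(X/(2*kmax)) ≤ X*(X/k - 1) := by
          apply mul_le_mul_of_nonneg_left _ hXpos.le
          linarith
        have e3 : 1*(X*(X/(2*kmax))) ≤ (h - r)*(X*(X/k - 1)) := by
          apply mul_le_mul (by linarith) e2 _ (by linarith)
          positivity
        have e4 : X*(X/(2*kmax)) = X^2*(2*kmax)⁻¹ := by ring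
        linarith [e3, e4 ▸ e3]
      have hXsq : 0 < X^2 := by positivity
      have h6 : (2*kmax)⁻¹ ≤ (r - h) * X * (1 - X/k) / X^2 := by
        rw [le_div_iff₀ hXsq]
        nlinarith [hG]
      have h7 : -((r - h) * X * (1 - X/k)) / X^2 = -((r - h) * X * (1 - X/k) / X^2) := by
        ring
      rw [h7]
      linarith
  have h1 : ψ t ≤ ψ t1 := hanti ⟨le_rfl, by linarith⟩ ⟨by linarith, le_rfl⟩ (by linarith)
  have hxt1 : 2*kmax ≤ x t1 := hgeq t1 ⟨ht1pos.le, ht1T⟩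
  have hxt : 2*kmax ≤ x t := hgeq t ht
  have h2 : ψ t1 ≤ (2*kmax)⁻¹ := by
    have : (x t1)⁻¹ ≤ (2*kmax)⁻¹ := by gcongr
    simp only [hψ, sub_self, mul_zero, add_zero]
    exact this
  have h3 : (2*kmax)⁻¹ < ψ t := by
    have hp : 0 < (x t)⁻¹ := inv_pos.2 (lt_of_lt_of_le (by positivity) hxt)
    have hq : (2*kmax)⁻¹ ≤ (2*kmax)⁻¹ * (t - t1) :=
      le_mul_of_one_le_right (by positivity) (by linarith)
    simp only [hψ]
    linarith
  exact absurd (h1.trans h2) (not_le.2 h3)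

end Apriori4

section LimitLemma

open Metric in
lemma exists_tendsto_of_lipschitz {f : ℝ → ℝ} {T K : ℝ} (hT : 0 < T) (hK : 0 ≤ K)
    (hlip : ∀ s ∈ Ico 0 T, ∀ t ∈ Ico 0 T, |f t - f s| ≤ K * |t - s|) :
    ∃ L, Tendsto f (nhdsWithin T (Iio T)) (nhds L) := by
  have hne : (nhdsWithin T (Iio T)).NeBot := nhdsLT_neBot T
  rw [← cauchy_map_iff_exists_tendsto]
  rw [cauchy_map_iff]
  refine ⟨hne, ?_⟩
  rw [Metric.uniformity_basis_dist.tendsto_right_iff]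
  intro ε hε
  set δ := min (ε/(K+1)) T with hδ
  have hδpos : 0 < δ := lt_min (by positivity) hT
  have hS : Ioo (T - δ) T ∈ nhdsWithin T (Iio T) :=
    Ioo_mem_nhdsLT_of_mem ⟨by linarith, le_rfl⟩
  have hsub : Ioo (T - δ) T ⊆ Ico 0 T := by
    intro s hs
    constructor
    · have : δ ≤ T := min_le_right _ _
      linarith [hs.1]
    · exact hs.2
  filter_upwards [Filter.prod_mem_prod hS hS] with p hp
  obtain ⟨hp1, hp2⟩ := hp
  have h1 := hlip p.2 (hsub hp2) p.1 (hsub hp1)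
  have h2 : |p.1 - p.2| < δ := by
    rw [abs_lt]
    constructor
    · linarith [hp1.1, hp1.2, hp2.1, hp2.2]
    · linarith [hp1.1, hp1.2, hp2.1, hp2.2]
  have h3 : K * |p.1 - p.2| ≤ K * (ε/(K+1)) :=
    mul_le_mul_of_nonneg_left (le_trans h2.le (min_le_left _ _)) hK
  have h4 : K * (ε/(K+1)) < ε := by
    rw [div_eq_inv_mul]
    have h5 : K * ((K+1)⁻¹ * ε) = (K/(K+1)) * ε := by ring
    rw [h5]
    have h6 : K/(K+1) < 1 := by
      rw [div_lt_one (by linarith)]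
      linarith
    nlinarith
  simp only [Real.dist_eq]
  linarith

end LimitLemma

section Picard

lemma vnlm_picard {a r d kmin kmax : ℝ} (ha : 0 < a) (hr : 0 < r) (hkmin : 0 < kmin)
    (hk : kmin ≤ kmax) (T L H : ℝ) :
    ∃ ε > (0:ℝ), ∃ z : ℝ → ℝ × ℝ, z T = (L, H) ∧
      ∀ t ∈ Icc T (T+ε), HasDerivWithinAt z
        (((r - (z t).2) * (z t).1 * (1 - (z t).1 / kcap kmin kmax d t), a * (z t).1))
        (Icc T (T+ε)) t := by
  set B := |L| + |H| + 1 with hB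
  have hB1 : 1 ≤ B := by rw [hB]; linarith [abs_nonneg L, abs_nonneg H]
  have hBpos : 0 < B := by linarith
  set v : ℝ → ℝ × ℝ → ℝ × ℝ :=
    fun t p => ((r - p.2) * p.1 * (1 - p.1 / kcap kmin kmax d t), a * p.1) with hv
  set Cf := (r+B)*B*(1+B/kmin) + a*B with hCf
  have hCfpos : 0 < Cf := by positivity
  set K1 := (r+B)*(1+2*B/kmin) + (B+B^2/kmin) + a with hK1
  have hK1pos : 0 < K1 := by positivity
  set ε := 1/(Cf+1) with hε
  have hεpos : 0 < ε := by positivity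
  clear_value B Cf K1 ε
  -- bounds on ball members
  have hball : ∀ p : ℝ × ℝ, p ∈ Metric.closedBall ((L:ℝ), (H:ℝ)) 1 → |p.1| ≤ B ∧ |p.2| ≤ B := by
    intro p hp
    rw [Metric.mem_closedBall, Prod.dist_eq, max_le_iff, Real.dist_eq, Real.dist_eq] at hp
    constructor
    · have := abs_sub_abs_le_abs_sub p.1 L
      have h2 := hp.1
      rw [hB]; linarith [abs_nonneg H]
    · have := abs_sub_abs_le_abs_sub p.2 H
      have h2 := hp.2
      rw [hB]; linarith [abs_nonneg L]
  have hpl : IsPicardLindelof v (tmin := T) (tmax := T+ε) ⟨T, le_rfl, by linarith⟩ (L, H) 1 0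
      ⟨Cf, hCfpos.le⟩ K1.toNNReal := by
    constructor
    · -- Lipschitz
      intro t _
      apply LipschitzOnWith.of_dist_le_mul
      intro p hp q hq
      obtain ⟨hp1, hp2⟩ := hball p (by simpa using hp)
      obtain ⟨hq1, hq2⟩ := hball q (by simpa using hq)
      set k := kcap kmin kmax d t with hkdef
      have hkpos : 0 < k := kcap_pos hkmin hk t
      have hkge : kmin ≤ k := kcap_ge hk t
      set D := dist p q with hD
      have hD0 : 0 ≤ D := dist_nonneg
      have hu : |p.1 - q.1| ≤ D := by
        rw [hD, Prod.dist_eq]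
        exact le_trans (le_of_eq (Real.dist_eq _ _).symm) (le_max_left _ _)
      have hvw : |p.2 - q.2| ≤ D := by
        rw [hD, Prod.dist_eq]
        exact le_trans (le_of_eq (Real.dist_eq _ _).symm) (le_max_right _ _)
      rw [Real.coe_toNNReal _ hK1pos.le]
      rw [Prod.dist_eq]
      apply max_le
      · -- first component
        rw [Real.dist_eq]
        have e0 : (r - p.2) * p.1 * (1 - p.1 / k) - (r - q.2) * q.1 * (1 - q.1 / k)
            = (r - p.2)*((p.1 - q.1) - (p.1 + q.1)*(p.1 - q.1)/k)
              + (q.2 - p.2)*(q.1 - q.1^2/k) := by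
          field_simp
          ring
        rw [e0]
        have b1 : |r - p.2| ≤ r + B := by
          have := abs_sub_abs_le_abs_sub r p.2
          have h3 : |r - p.2| ≤ |r| + |p.2| := abs_sub _ _
          rw [abs_of_pos hr] at h3
          linarith
        have b2 : |(p.1 - q.1) - (p.1 + q.1)*(p.1 - q.1)/k| ≤ D + 2*B*D/kmin := by
          have h4 : |(p.1 + q.1)*(p.1 - q.1)/k| ≤ 2*B*D/kmin := by
            rw [abs_div, abs_of_pos hkpos]
            gcongr
            calc |(p.1 + q.1)*(p.1 - q.1)| = |p.1 + q.1| * |p.1 - q.1| := abs_mul _ _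
            _ ≤ (2*B) * D := by
              apply mul_le_mul _ hu (abs_nonneg _) (by positivity)
              calc |p.1 + q.1| ≤ |p.1| + |q.1| := abs_add_le _ _
              _ ≤ 2*B := by linarith
          calc |(p.1 - q.1) - (p.1 + q.1)*(p.1 - q.1)/k|
              ≤ |p.1 - q.1| + |(p.1 + q.1)*(p.1 - q.1)/k| := abs_sub _ _
          _ ≤ D + 2*B*D/kmin := add_le_add hu h4
        have b3 : |q.1 - q.1^2/k| ≤ B + B^2/kmin := by
          have h5 : |q.1^2/k| ≤ B^2/kmin := by
            rw [abs_div, abs_of_pos hkpos]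
            gcongr
            rw [abs_pow]
            exact pow_le_pow_left₀ (abs_nonneg _) hq1 2
          calc |q.1 - q.1^2/k| ≤ |q.1| + |q.1^2/k| := abs_sub _ _
          _ ≤ B + B^2/kmin := add_le_add hq1 h5
        calc |(r - p.2)*((p.1 - q.1) - (p.1 + q.1)*(p.1 - q.1)/k)
              + (q.2 - p.2)*(q.1 - q.1^2/k)|
            ≤ |(r - p.2)*((p.1 - q.1) - (p.1 + q.1)*(p.1 - q.1)/k)|
              + |(q.2 - p.2)*(q.1 - q.1^2/k)| := abs_add_le _ _
        _ = |r - p.2| * |(p.1 - q.1) - (p.1 + q.1)*(p.1 - q.1)/k|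
              + |q.2 - p.2| * |q.1 - q.1^2/k| := by rw [abs_mul, abs_mul]
        _ ≤ (r + B)*(D + 2*B*D/kmin) + D*(B + B^2/kmin) := by
          apply add_le_add
          · exact mul_le_mul b1 b2 (abs_nonneg _) (by positivity)
          · rw [abs_sub_comm]
            exact mul_le_mul hvw b3 (abs_nonneg _) hD0
        _ = ((r+B)*(1+2*B/kmin) + (B+B^2/kmin))*D := by ring
        _ ≤ K1 * D := by
          apply mul_le_mul_of_nonneg_right _ hD0
          rw [hK1]
          linarith
      · -- second component
        rw [Real.dist_eq]
        have : |a*p.1 - a*q.1| = a * |p.1 - q.1| := by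
          rw [← mul_sub, abs_mul, abs_of_pos ha]
        rw [this]
        calc a * |p.1 - q.1| ≤ a * D := mul_le_mul_of_nonneg_left hu ha.le
        _ ≤ K1 * D := by
          apply mul_le_mul_of_nonneg_right _ hD0
          have h9 : (0:ℝ) ≤ (r+B)*(1+2*B/kmin) := by positivity
          have h10 : (0:ℝ) ≤ B+B^2/kmin := by positivity
          rw [hK1]
          linarith
    · -- continuity in t
      intro p _
      apply Continuous.continuousOn
      apply Continuous.prodMk
      · exact (continuous_const.mul continuous_const).mul
          (continuous_const.sub (Continuous.div continuous_const (kcap_cont kmin kmax d)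
            (fun t => (kcap_pos hkmin hk t).ne')))
      · exact continuous_const
    · -- norm bound
      intro t _ p hp
      obtain ⟨hp1, hp2⟩ := hball p (by simpa using hp)
      set k := kcap kmin kmax d t with hkdef
      have hkpos : 0 < k := kcap_pos hkmin hk t
      have hkge : kmin ≤ k := kcap_ge hk t
      rw [hv]
      rw [Prod.norm_def]
      apply max_le
      · show |(r - p.2) * p.1 * (1 - p.1 / k)| ≤ Cf
        have b1 : |r - p.2| ≤ r + B := by
          have h3 : |r - p.2| ≤ |r| + |p.2| := abs_sub _ _
          rw [abs_of_pos hr] at h3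
          linarith
        have b4 : |1 - p.1/k| ≤ 1 + B/kmin := by
          have h5 : |p.1/k| ≤ B/kmin := by
            rw [abs_div, abs_of_pos hkpos]
            gcongr
          calc |1 - p.1/k| ≤ |1| + |p.1/k| := abs_sub _ _
          _ ≤ 1 + B/kmin := by rw [abs_one]; linarith
        have habs2 : |(r - p.2) * p.1 * (1 - p.1 / k)| = |r - p.2| * |p.1| * |1 - p.1 / k| := by
          rw [abs_mul, abs_mul]
        calc |(r - p.2) * p.1 * (1 - p.1 / k)| = |r - p.2| * |p.1| * |1 - p.1 / k| := habs2
        _ ≤ (r+B) * B * (1+B/kmin) := by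
          apply mul_le_mul _ b4 (abs_nonneg _) (by positivity)
          exact mul_le_mul b1 hp1 (abs_nonneg _) (by positivity)
        _ ≤ Cf := by
          have h11 : 0 < a * B := mul_pos ha hBpos
          rw [hCf]; linarith
      · show |a * p.1| ≤ Cf
        rw [abs_mul, abs_of_pos ha]
        calc a * |p.1| ≤ a * B := mul_le_mul_of_nonneg_left hp1 ha.le
        _ ≤ Cf := by
          have h11 : (0:ℝ) ≤ (r+B) * B * (1+B/kmin) := by positivity
          rw [hCf]; linarith
    · -- C * length ≤ R
      simp only [NNReal.coe_one, NNReal.coe_zero, sub_zero, NNReal.coe_mk]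
      show Cf * max ((T+ε) - T) (T - T) ≤ 1
      have : max ((T+ε) - T) (T - T) = ε := by
        rw [add_sub_cancel_left, sub_self]
        exact max_eq_left hεpos.le
      rw [this, hε]
      rw [div_eq_inv_mul, mul_one]
      rw [← div_eq_mul_inv, div_le_one (by linarith)]
      linarith
  obtain ⟨z, hz0, hzd⟩ := hpl.exists_eq_forall_mem_Icc_hasDerivWithinAt₀
  exact ⟨ε, hεpos, z, hz0, hzd⟩

end Picard

section Extend

lemma vnlm_extend {a r d kmin kmax T x0 : ℝ} {x : ℝ → ℝ}
    (ha : 0 < a) (hr : 0 < r) (hkmin : 0 < kmin) (hk : kmin ≤ kmax)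
    (hT : 0 < T) (hx0 : x 0 = x0)
    (hX0 : 4*kmax*Real.exp ((r+1)*r/(a*kmin)) ≤ x0)
    (sol : IsVNLMSolOn a r d kmin kmax x (Ico 0 T))
    (hbnd : ∃ C, ∀ᶠ t in nhdsWithin T (Iio T), x t ≤ C) :
    ∃ b, T < b ∧ ∃ y : ℝ → ℝ, y 0 = x0 ∧ IsVNLMSolOn a r d kmin kmax y (Ico 0 b) ∧
      ∀ t ∈ Ico 0 T, y t = x t := by
  have hkmax : 0 < kmax := lt_of_lt_of_le hkmin hk
  -- Step A : global bound C0 for |x| on [0,T)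
  obtain ⟨C, hC⟩ := hbnd
  obtain ⟨u, hu, husub⟩ := mem_nhdsLT_iff_exists_Ioo_subset.1 hC
  set u' := max u 0 with hu'def
  have hu'T : u' < T := max_lt hu hT
  have hu'0 : 0 ≤ u' := le_max_right _ _
  have hIccsub : Icc 0 u' ⊆ Ico 0 T := fun s hs => ⟨hs.1, lt_of_le_of_lt hs.2 hu'T⟩
  obtain ⟨C1, hC1⟩ := (isCompact_Icc (a := (0:ℝ)) (b := u')).exists_bound_of_continuousOn
    (sol.1.mono hIccsub)
  set C0 := |C1| + |C| + 1 with hC0def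
  have hC0pos : 0 < C0 := by positivity
  have hxbd : ∀ t ∈ Ico 0 T, |x t| ≤ C0 := by
    intro t ht
    by_cases htu : t ≤ u'
    · have := hC1 t ⟨ht.1, htu⟩
      rw [Real.norm_eq_abs] at this
      have h2 := le_abs_self C1
      rw [hC0def]; linarith [abs_nonneg C]
    · push_neg at htu
      have htIoo : t ∈ Ioo u T := ⟨lt_of_le_of_lt (le_max_left u 0) htu, ht.2⟩
      have hxle : x t ≤ C := husub htIoo
      have hxge : 2*kmax ≤ x t := vnlm_ge ha hr hkmin hk hx0 hX0 sol t ht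
      rw [abs_le]
      constructor
      · rw [hC0def]; have := abs_nonneg C1; have := abs_nonneg C; nlinarith
      · rw [hC0def]; linarith [le_abs_self C, abs_nonneg C1]
  -- Step B : hcum is Lipschitz on [0,T)
  have hints : ∀ p ∈ Ico (0:ℝ) T, ∀ q ∈ Ico (0:ℝ) T, IntervalIntegrable x volume p q := by
    intro p hp q hq
    apply ContinuousOn.intervalIntegrable
    exact sol.1.mono (Set.ordConnected_Ico.uIcc_subset hp hq)
  have hhlip : ∀ s ∈ Ico (0:ℝ) T, ∀ t ∈ Ico (0:ℝ) T,
      |hcum a x t - hcum a x s| ≤ (a*C0) * |t - s| := by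
    intro s hs t ht
    have hadd : (∫ z in (0:ℝ)..s, x z) + ∫ z in s..t, x z = ∫ z in (0:ℝ)..t, x z :=
      intervalIntegral.integral_add_adjacent_intervals
        (hints 0 ⟨le_rfl, hT⟩ s hs) (hints s hs t ht)
    have hdiff : hcum a x t - hcum a x s = a * ∫ z in s..t, x z := by
      show a * (∫ z in (0:ℝ)..t, x z) - a * ∫ z in (0:ℝ)..s, x z = _
      rw [← hadd]; ring
    rw [hdiff, abs_mul, abs_of_pos ha]
    have hbound : |∫ z in s..t, x z| ≤ C0 * |t - s| := by
      rw [← Real.norm_eq_abs, ← Real.norm_eq_abs (t - s)]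
      apply intervalIntegral.norm_integral_le_of_norm_le_const
      intro z hz
      rw [Real.norm_eq_abs]
      apply hxbd
      rcases le_total s t with hst | hst
      · rw [uIoc_of_le hst] at hz
        exact ⟨le_trans hs.1 hz.1.le, lt_of_le_of_lt hz.2 ht.2⟩
      · rw [uIoc_of_ge hst] at hz
        exact ⟨le_trans ht.1 hz.1.le, lt_of_le_of_lt hz.2 hs.2⟩
    calc a * |∫ z in s..t, x z| ≤ a * (C0 * |t - s|) :=
      mul_le_mul_of_nonneg_left hbound ha.le
    _ = (a*C0) * |t-s| := by ring
  -- Step C : global bound for hcum and the derivative; x is Lipschitz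
  have hh0 : hcum a x 0 = 0 := by simp [hcum]
  have hhbd : ∀ t ∈ Ico (0:ℝ) T, |hcum a x t| ≤ a*C0*T := by
    intro t ht
    have := hhlip 0 ⟨le_rfl, hT⟩ t ht
    rw [hh0, sub_zero, sub_zero] at this
    calc |hcum a x t| ≤ (a*C0) * |t| := this
    _ ≤ (a*C0) * T := by
      rw [abs_of_nonneg ht.1]
      exact mul_le_mul_of_nonneg_left ht.2.le (by positivity)
    _ = a*C0*T := by ring
  set K := (r + a*C0*T) * (C0 * (1 + C0/kmin)) with hKdef
  have hKpos : 0 < K := by positivity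
  have hgbd : ∀ t ∈ Ico (0:ℝ) T,
      ‖(r - hcum a x t) * x t * (1 - x t / kcap kmin kmax d t)‖ ≤ K := by
    intro t ht
    rw [Real.norm_eq_abs, abs_mul, abs_mul]
    set kc := kcap kmin kmax d t with hkc
    have hkcpos : 0 < kc := kcap_pos hkmin hk t
    have hkcge : kmin ≤ kc := kcap_ge hk t
    have b1 : |r - hcum a x t| ≤ r + a*C0*T := by
      have h3 : |r - hcum a x t| ≤ |r| + |hcum a x t| := abs_sub _ _
      rw [abs_of_pos hr] at h3
      linarith [hhbd t ht]
    have b2 : |x t| ≤ C0 := hxbd t ht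
    have b3 : |1 - x t/kc| ≤ 1 + C0/kmin := by
      have h5 : |x t/kc| ≤ C0/kmin := by
        rw [abs_div, abs_of_pos hkcpos]
        gcongr
      calc |1 - x t/kc| ≤ |1| + |x t/kc| := abs_sub _ _
      _ ≤ 1 + C0/kmin := by rw [abs_one]; linarith
    rw [hKdef]
    have h6 : |r - hcum a x t| * |x t| ≤ (r + a*C0*T) * C0 :=
      mul_le_mul b1 b2 (abs_nonneg _) (by positivity)
    calc |r - hcum a x t| * |x t| * |1 - x t/kc|
        ≤ ((r + a*C0*T) * C0) * (1 + C0/kmin) :=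
      mul_le_mul h6 b3 (abs_nonneg _) (by positivity)
    _ = (r + a*C0*T) * (C0 * (1 + C0/kmin)) := by ring
  have hxlip : ∀ s ∈ Ico (0:ℝ) T, ∀ t ∈ Ico (0:ℝ) T, |x t - x s| ≤ K * |t - s| := by
    intro s hs t ht
    have := Convex.norm_image_sub_le_of_norm_hasDerivWithin_le
      (fun z hz => sol.2 z hz) hgbd (convex_Ico 0 T) hs ht
    rw [Real.norm_eq_abs, Real.norm_eq_abs] at this
    exact this
  -- Step D : limits at T from the left
  obtain ⟨L, hL⟩ := exists_tendsto_of_lipschitz hT hKpos.le hxlip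
  obtain ⟨H, hH⟩ := exists_tendsto_of_lipschitz hT (by positivity)
    (fun s hs t ht => hhlip s hs t ht)
  -- Step E : Picard-Lindelof local solution starting at (L, H)
  obtain ⟨ε, hεpos, z, hz0, hzd⟩ := vnlm_picard (d := d) ha hr hkmin hk T L H
  set b := T + ε with hbdef
  have hTb : T < b := by rw [hbdef]; linarith
  set y : ℝ → ℝ := fun t => if t < T then x t else (z t).1 with hy
  have hyx : ∀ t, t < T → y t = x t := fun t ht => if_pos ht
  have hyz : ∀ t, T ≤ t → y t = (z t).1 := fun t ht => if_neg (not_lt.2 ht)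
  have hyT : y T = L := by rw [hyz T le_rfl, hz0]
  have hzc : ContinuousOn z (Icc T b) := fun t ht => (hzd t ht).continuousWithinAt
  have hz1c : ContinuousOn (fun t => (z t).1) (Icc T b) := continuous_fst.comp_continuousOn hzc
  have hz2c : ContinuousOn (fun t => (z t).2) (Icc T b) := continuous_snd.comp_continuousOn hzc
  have hz1d : ∀ t ∈ Icc T b, HasDerivWithinAt (fun s => (z s).1)
      ((r - (z t).2) * (z t).1 * (1 - (z t).1 / kcap kmin kmax d t)) (Icc T b) t := by
    intro t ht
    have h2 := (ContinuousLinearMap.fst ℝ ℝ ℝ).hasFDerivAt.comp_hasDerivWithinAt t (hzd t ht)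
    exact h2
  have hz2d : ∀ t ∈ Icc T b, HasDerivWithinAt (fun s => (z s).2)
      (a * (z t).1) (Icc T b) t := by
    intro t ht
    have h2 := (ContinuousLinearMap.snd ℝ ℝ ℝ).hasFDerivAt.comp_hasDerivWithinAt t (hzd t ht)
    exact h2
  have hyL : Tendsto y (nhdsWithin T (Iio T)) (nhds L) := by
    apply hL.congr'
    filter_upwards [self_mem_nhdsWithin] with t ht
    exact (hyx t ht).symm
  -- continuity of y on [0, b]
  have hycont : ContinuousOn y (Icc 0 b) := by
    intro t ht
    rcases lt_trichotomy t T with h1 | h1 | h1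
    · have hmm : Ico 0 T ∈ nhdsWithin t (Icc 0 b) :=
        mem_nhdsWithin.2 ⟨Iio T, isOpen_Iio, h1, fun s hs => ⟨hs.2.1, hs.1⟩⟩
      have hx1 : ContinuousWithinAt x (Icc 0 b) t :=
        (sol.1 t ⟨ht.1, h1⟩).mono_of_mem_nhdsWithin hmm
      apply hx1.congr_of_eventuallyEq _ (hyx t h1)
      filter_upwards [mem_nhdsWithin_of_mem_nhds (Iio_mem_nhds h1)] with s hs
      exact hyx s hs
    · subst h1
      have hA : ContinuousWithinAt y (Iio t) t := by
        unfold ContinuousWithinAt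
        rw [hyT]
        exact hyL
      have hB : ContinuousWithinAt y (Icc t b) t :=
        (hz1c t ⟨le_rfl, hTb.le⟩).congr (fun s hs => hyz s hs.1) (hyz t le_rfl)
      exact (hA.union hB).mono (fun s hs => (lt_or_ge s t).elim Or.inl
        (fun h2 => Or.inr ⟨h2, hs.2⟩))
    · have hmm : Icc T b ∈ nhdsWithin t (Icc 0 b) :=
        mem_nhdsWithin.2 ⟨Ioi T, isOpen_Ioi, h1, fun s hs => ⟨hs.1.le, hs.2.2⟩⟩
      have hz1 : ContinuousWithinAt (fun s => (z s).1) (Icc 0 b) t :=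
        (hz1c t ⟨h1.le, ht.2⟩).mono_of_mem_nhdsWithin hmm
      apply hz1.congr_of_eventuallyEq _ (hyz t h1.le)
      filter_upwards [mem_nhdsWithin_of_mem_nhds (Ioi_mem_nhds h1)] with s hs
      exact hyz s hs.le
  -- interval integrability of y
  have hyint : ∀ p ∈ Icc (0:ℝ) b, ∀ q ∈ Icc (0:ℝ) b, IntervalIntegrable y volume p q :=
    fun p hp q hq => ContinuousOn.intervalIntegrable
      (hycont.mono (Set.ordConnected_Icc.uIcc_subset hp hq))
  have hy_eq_x_int : ∀ t ∈ Ico (0:ℝ) T, (∫ s in (0:ℝ)..t, y s) = ∫ s in (0:ℝ)..t, x s := by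
    intro t ht
    apply intervalIntegral.integral_congr
    intro s hs
    rw [uIcc_of_le ht.1] at hs
    exact hyx s (lt_of_le_of_lt hs.2 ht.2)
  have hcum_eq : ∀ t ∈ Ico (0:ℝ) T, hcum a y t = hcum a x t := by
    intro t ht
    show a * _ = a * _
    rw [hy_eq_x_int t ht]
  -- hcum of y at T equals H
  have hcumyT : hcum a y T = H := by
    have hyIccT : IntegrableOn y (Icc 0 T) :=
      ContinuousOn.integrableOn_Icc (hycont.mono (Icc_subset_Icc le_rfl hTb.le))
    have hP : ContinuousOn (fun t => ∫ s in (0:ℝ)..t, y s) (Icc 0 T) := by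
      have h2 := intervalIntegral.continuousOn_primitive_interval
        (μ := volume) (a := (0:ℝ)) (b := T) (f := y) (by rwa [uIcc_of_le hT.le])
      rwa [uIcc_of_le hT.le] at h2
    have hne : (nhdsWithin T (Ioo 0 T)).NeBot := right_nhdsWithin_Ioo_neBot hT
    have t1 : Tendsto (fun t => a * ∫ s in (0:ℝ)..t, y s) (nhdsWithin T (Ioo 0 T))
        (nhds (a * ∫ s in (0:ℝ)..T, y s)) :=
      (((hP T ⟨hT.le, le_rfl⟩).mono_left
        (nhdsWithin_mono _ Ioo_subset_Icc_self)).const_mul a)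
    have t2 : Tendsto (hcum a x) (nhdsWithin T (Ioo 0 T)) (nhds H) :=
      hH.mono_left (nhdsWithin_mono _ Ioo_subset_Iio_self)
    have hee : (fun t => a * ∫ s in (0:ℝ)..t, y s) =ᶠ[nhdsWithin T (Ioo 0 T)] hcum a x := by
      filter_upwards [self_mem_nhdsWithin] with s hs
      show a * _ = hcum a x s
      rw [hy_eq_x_int s ⟨hs.1.le, hs.2⟩]
      rfl
    exact tendsto_nhds_unique (Filter.Tendsto.congr' hee t1) t2
  -- hcum of y equals z.2 on [T, b]
  have hcumyz : ∀ t ∈ Icc T b, hcum a y t = (z t).2 := by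
    intro t ht
    have hTmem : T ∈ Icc (0:ℝ) b := ⟨hT.le, hTb.le⟩
    have htmem0 : t ∈ Icc (0:ℝ) b := ⟨le_trans hT.le ht.1, ht.2⟩
    have hadd : (∫ s in (0:ℝ)..T, y s) + ∫ s in T..t, y s = ∫ s in (0:ℝ)..t, y s :=
      intervalIntegral.integral_add_adjacent_intervals
        (hyint 0 ⟨le_rfl, le_trans hT.le hTb.le⟩ T hTmem)
        (hyint T hTmem t htmem0)
    have hyzint : (∫ s in T..t, y s) = ∫ s in T..t, (z s).1 := by
      apply intervalIntegral.integral_congr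
      intro s hs
      rw [uIcc_of_le ht.1] at hs
      exact hyz s hs.1
    have hftc : (∫ s in T..t, a * (z s).1) = (z t).2 - (z T).2 := by
      apply intervalIntegral.integral_eq_sub_of_hasDeriv_right_of_le ht.1
      · exact hz2c.mono (Icc_subset_Icc le_rfl ht.2)
      · intro s hs
        have hsIcc : s ∈ Icc T b := ⟨hs.1.le, le_trans hs.2.le ht.2⟩
        have hmm : Icc T b ∈ nhdsWithin s (Ioi s) :=
          Icc_mem_nhdsGT_of_mem ⟨hsIcc.1, lt_of_lt_of_le hs.2 ht.2⟩
        exact (hz2d s hsIcc).mono_of_mem_nhdsWithin hmm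
      · apply ContinuousOn.intervalIntegrable
        rw [uIcc_of_le ht.1]
        exact continuousOn_const.mul (hz1c.mono (Icc_subset_Icc le_rfl ht.2))
    have hz2T : (z T).2 = H := by rw [hz0]
    show a * ∫ s in (0:ℝ)..t, y s = (z t).2
    rw [← hadd, mul_add]
    have e1 : a * ∫ s in (0:ℝ)..T, y s = H := hcumyT
    rw [e1, hyzint, ← intervalIntegral.integral_const_mul, hftc, hz2T]
    ring
  -- assemble
  refine ⟨b, hTb, y, ?_, ⟨hycont.mono Ico_subset_Icc_self, ?_⟩, fun t ht => by
    rw [hyx t ht.2]⟩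
  · rw [hyx 0 hT, hx0]
  · intro t ht
    rcases lt_trichotomy t T with h1 | h1 | h1
    · -- t < T : y is locally x
      have hxd := sol.2 t ⟨ht.1, h1⟩
      have hmm : Ico 0 T ∈ nhdsWithin t (Ico 0 b) :=
        mem_nhdsWithin.2 ⟨Iio T, isOpen_Iio, h1, fun s hs => ⟨hs.2.1, hs.1⟩⟩
      have hxd2 := hxd.mono_of_mem_nhdsWithin hmm
      have hev : y =ᶠ[nhdsWithin t (Ico 0 b)] x := by
        filter_upwards [mem_nhdsWithin_of_mem_nhds (Iio_mem_nhds h1)] with s hs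
        exact hyx s hs
      have hyd := hxd2.congr_of_eventuallyEq hev (hyx t h1)
      rw [hcum_eq t ⟨ht.1, h1⟩, hyx t h1]
      exact hyd
    · -- t = T : the junction
      subst h1
      have hkT : (0:ℝ) < kcap kmin kmax d t := kcap_pos hkmin hk t
      have hleft : HasDerivWithinAt y
          ((r - H) * L * (1 - L / kcap kmin kmax d t)) (Iic t) t := by
        apply hasDerivWithinAt_Iic_of_tendsto_deriv (s := Ioo 0 t)
        · intro s hs
          have hnb : Ico 0 t ∈ nhds s :=
            mem_nhds_iff.2 ⟨Ioo 0 t, Ioo_subset_Ico_self, isOpen_Ioo, hs⟩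
          have hxd := (sol.2 s ⟨hs.1.le, hs.2⟩).hasDerivAt hnb
          have hev : y =ᶠ[nhds s] x := by
            filter_upwards [Iio_mem_nhds hs.2] with w hw
            exact hyx w hw
          exact ((hxd.congr_of_eventuallyEq hev).differentiableAt).differentiableWithinAt
        · unfold ContinuousWithinAt
          rw [hyT]
          exact hyL.mono_left (nhdsWithin_mono _ Ioo_subset_Iio_self)
        · exact Ioo_mem_nhdsLT_of_mem ⟨hT, le_rfl⟩
        · have hkten : Tendsto (fun s => kcap kmin kmax d s) (nhdsWithin t (Iio t))
              (nhds (kcap kmin kmax d t)) :=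
            ((kcap_cont kmin kmax d).tendsto t).mono_left nhdsWithin_le_nhds
          have hGlim : Tendsto
              (fun s => (r - hcum a x s) * x s * (1 - x s / kcap kmin kmax d s))
              (nhdsWithin t (Iio t))
              (nhds ((r - H) * L * (1 - L / kcap kmin kmax d t))) :=
            ((tendsto_const_nhds.sub hH).mul hL).mul
              (tendsto_const_nhds.sub (hL.div hkten hkT.ne'))
          apply Filter.Tendsto.congr' _ hGlim
          filter_upwards [Ioo_mem_nhdsLT_of_mem (⟨hT, le_rfl⟩ : t ∈ Ioc 0 t)] with s hs
          have hnb : Ico 0 t ∈ nhds s :=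
            mem_nhds_iff.2 ⟨Ioo 0 t, Ioo_subset_Ico_self, isOpen_Ioo, hs⟩
          have hxd := (sol.2 s ⟨hs.1.le, hs.2⟩).hasDerivAt hnb
          have hev : y =ᶠ[nhds s] x := by
            filter_upwards [Iio_mem_nhds hs.2] with w hw
            exact hyx w hw
          exact ((hxd.congr_of_eventuallyEq hev).deriv).symm
      have hrightz := hz1d t ⟨le_rfl, hTb.le⟩
      rw [hz0] at hrightz
      have hright : HasDerivWithinAt y
          ((r - H) * L * (1 - L / kcap kmin kmax d t)) (Icc t b) t :=
        hrightz.congr (fun s hs => hyz s hs.1) (by rw [hyz t le_rfl, hz0])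
      have hunion := hleft.union hright
      rw [hcumyT, hyT]
      exact hunion.mono (fun s hs => (le_or_gt s t).elim Or.inl
        (fun h2 => Or.inr ⟨h2.le, hs.2.le⟩))
    · -- T < t
      have htmem : t ∈ Icc T b := ⟨h1.le, ht.2.le⟩
      have hzd1 := hz1d t htmem
      have hmm : Icc T b ∈ nhdsWithin t (Ico 0 b) :=
        mem_nhdsWithin.2 ⟨Ioi T, isOpen_Ioi, h1, fun s hs => ⟨hs.1.le, hs.2.2.le⟩⟩
      have hev : y =ᶠ[nhdsWithin t (Ico 0 b)] (fun s => (z s).1) := by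
        filter_upwards [mem_nhdsWithin_of_mem_nhds (Ioi_mem_nhds h1)] with s hs
        exact hyz s hs.le
      have hyd := (hzd1.mono_of_mem_nhdsWithin hmm).congr_of_eventuallyEq hev (hyz t h1.le)
      rw [hcumyz t htmem, hyz t h1.le]
      exact hyd

end Extend

/-- there is a threshold `X₀ > 0` such that for every initial value
`x₀ ≥ X₀` the solution of the VNLM blows up in finite time. -/
theorem vnlm_blowup_large_data (a r d kmin kmax : ℝ)
    (ha : 0 < a) (hr : 0 < r) (hd : 0 < d)
    (hkmin : 0 < kmin) (hk : kmin ≤ kmax) :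
    ∃ X0 : ℝ, 0 < X0 ∧ ∀ x0 : ℝ, X0 ≤ x0 → VNLMBlowsUp a r d kmin kmax x0 := by
  have hkmax : 0 < kmax := lt_of_lt_of_le hkmin hk
  refine ⟨4*kmax*Real.exp ((r+1)*r/(a*kmin)), by positivity, ?_⟩
  intro x0 hX0
  constructor
  · -- no global solution
    rintro ⟨x, hx0, solIci⟩
    set t1 := kmin/(4*r*kmax) with ht1
    have ht1pos : 0 < t1 := by positivity
    have hsub : Ico (0:ℝ) (t1+2) ⊆ Ici 0 := fun s hs => hs.1
    have sol' : IsVNLMSolOn a r d kmin kmax x (Ico 0 (t1+2)) :=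
      ⟨solIci.1.mono hsub, fun t ht => (solIci.2 t (hsub ht)).mono hsub⟩
    have := vnlm_lt ha hr hkmin hk hx0 hX0 sol' (t1+1) ⟨by linarith, by linarith⟩
    rw [← ht1] at this
    linarith
  · -- maximal solutions blow up
    intro Tstar x hTpos hx0 sol hmax
    by_contra hne
    have hlt : Filter.limsup (fun t => (x t : EReal))
        (nhdsWithin Tstar (Set.Iio Tstar)) < ⊤ := Ne.lt_top hne
    obtain ⟨C, hC1, hC2⟩ := EReal.lt_iff_exists_real_btwn.1 hlt
    have hbnd : ∃ C : ℝ, ∀ᶠ t in nhdsWithin Tstar (Set.Iio Tstar), x t ≤ C := by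
      refine ⟨C, ?_⟩
      have hev := Filter.eventually_lt_of_limsup_lt hC1
      filter_upwards [hev] with t ht
      exact_mod_cast ht.le
    obtain ⟨b, hbT, y, hy0, hysol, hagree⟩ :=
      vnlm_extend ha hr hkmin hk hTpos hx0 hX0 sol hbnd
    exact hmax ⟨b, hbT, y, hy0, hysol, hagree⟩
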